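/- Let p(x) = Σ_{l=0}^{N} b_l x^l be any real polynomial of degree at most N, and let 0 < α_k < π/2 for 0 ≤ k ≤ N. Then there exist ω_k ∈ [0, 2π] and A_k ∈ ℝ for 0 ≤ k ≤ N such that p(x) = Σ_{k=0}^{N} A_k · T_N(ω_k, α_k, x) for all x ∈ [0, 1], where T_N(ω,α,x) = Σ_{l=0}^{N} ω^l sin(α + lπ/2) x^l / l!. -/

import Mathlib

open Real Finset


lemma sin_shift_ne_zero {a : ℝ} (h0 : 0 < a) (h1 : a < π / 2) (l : ℕ) :
    Real.sin (a + l * π / 2) ≠ 0 := by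
  intro h
  rw [Real.sin_eq_zero_iff] at h
  obtain ⟨n, hn⟩ := h
  have hπ := Real.pi_pos
  have key : ((2 * n - l : ℤ) : ℝ) * (π / 2) = a := by push_cast; linarith
  have h2 : (0:ℝ) < ((2 * n - l : ℤ) : ℝ) := by nlinarith
  have h3 : ((2 * n - l : ℤ) : ℝ) < 1 := by nlinarith
  have h2' : (0:ℤ) < 2 * n - l := by exact_mod_cast h2
  have h3' : (2 * n - l : ℤ) < 1 := by exact_mod_cast h3
  omega

lemma aux_escape (n : ℕ) (c : Fin (n+1) → ℝ) (hc : ∀ l, c l ≠ 0)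
    (W : Submodule ℝ (Fin (n+1) → ℝ)) (hW : W ≠ ⊤) :
    ∃ ω ∈ Set.Ioo (0:ℝ) 1, (fun l : Fin (n+1) => ω ^ (l:ℕ) * c l) ∉ W := by
  by_contra h
  push_neg at h
  set x : Fin (n+1) → ℝ := fun j => ((j:ℕ)+1)/((n:ℝ)+2) with hxdef
  have hden : (0:ℝ) < (n:ℝ) + 2 := by positivity
  have hxmem : ∀ j, x j ∈ Set.Ioo (0:ℝ) 1 := by
    intro j
    constructor
    · positivity
    · rw [div_lt_one hden]
      have : (j:ℕ) < n + 1 := j.isLt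
      have : ((j:ℕ):ℝ) < (n:ℝ) + 1 := by exact_mod_cast this
      linarith
  have hxinj : Function.Injective x := by
    intro i j hij
    simp only [hxdef] at hij
    field_simp at hij
    have : (i:ℕ) = (j:ℕ) := by exact_mod_cast (add_right_cancel hij)
    exact Fin.ext this
  set M : Matrix (Fin (n+1)) (Fin (n+1)) ℝ :=
    Matrix.of fun j l => x j ^ (l:ℕ) * c l with hM
  have hMeq : M = Matrix.vandermonde x * Matrix.diagonal c := by
    ext j l
    rw [Matrix.mul_diagonal]
    simp [hM, Matrix.vandermonde]
  have hdet : M.det ≠ 0 := by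
    rw [hMeq, Matrix.det_mul, Matrix.det_diagonal]
    exact mul_ne_zero (Matrix.det_vandermonde_ne_zero_iff.mpr hxinj)
      (Finset.prod_ne_zero_iff.mpr fun l _ => hc l)
  have hunit : IsUnit M := (Matrix.isUnit_iff_isUnit_det M).mpr (isUnit_iff_ne_zero.mpr hdet)
  have hli : LinearIndependent ℝ (fun j => M j) :=
    Matrix.linearIndependent_rows_iff_isUnit.mpr hunit
  have hspan : Submodule.span ℝ (Set.range fun j => M j) = ⊤ :=
    hli.span_eq_top_of_card_eq_finrank (by simp [Module.finrank_fin_fun])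
  apply hW
  rw [← top_le_iff, ← hspan]
  rw [Submodule.span_le]
  rintro - ⟨j, rfl⟩
  have := h (x j) (hxmem j)
  exact this

/-- Any polynomial of degree at most `N` is an exact combination of the Taylor
polynomials `T_N(ω_k, α_k, ·)` of sinusoids with suitable frequencies and amplitudes. -/
theorem poly_eq_sum_taylor_sin (N : ℕ) (b α : ℕ → ℝ)
    (hα : ∀ k ≤ N, α k ∈ Set.Ioo (0:ℝ) (π / 2)) :
    ∃ ω A : ℕ → ℝ, (∀ k ≤ N, ω k ∈ Set.Icc (0:ℝ) (2 * π)) ∧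
      ∀ x ∈ Set.Icc (0:ℝ) 1,
        (∑ l ∈ Finset.range (N + 1), b l * x ^ l) =
          ∑ k ∈ Finset.range (N + 1), A k *
            ∑ l ∈ Finset.range (N + 1),
              (ω k) ^ l * Real.sin (α k + l * π / 2) * x ^ l / l.factorial := by
  set g : ℕ → ℝ → (Fin (N+1) → ℝ) :=
    fun k t l => t ^ (l:ℕ) * (Real.sin (α k + (l:ℕ) * π / 2) / (l:ℕ).factorial) with hg
  have key : ∀ m, m ≤ N + 1 → ∃ ω : ℕ → ℝ, (∀ k, ω k ∈ Set.Icc (0:ℝ) 1) ∧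
      LinearIndependent ℝ (fun j : Fin m => g (j:ℕ) (ω (j:ℕ))) := by
    intro m
    induction m with
    | zero =>
      intro _
      exact ⟨fun _ => 0, fun k => ⟨le_refl 0, zero_le_one⟩, linearIndependent_empty_type⟩
    | succ m ih =>
      intro hm
      obtain ⟨ω, hω, hli⟩ := ih (Nat.le_of_succ_le hm)
      have hmN : m ≤ N := Nat.succ_le_succ_iff.mp hm
      set W : Submodule ℝ (Fin (N+1) → ℝ) :=
        Submodule.span ℝ (Set.range fun j : Fin m => g (j:ℕ) (ω (j:ℕ))) with hWdef
      have hW : W ≠ ⊤ := by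
        apply ne_of_lt
        apply span_lt_top_of_card_lt_finrank
        have hfr : Module.finrank ℝ (Fin (N+1) → ℝ) = N + 1 := Module.finrank_fin_fun ℝ
        rw [hfr]
        calc (Set.range fun j : Fin m => g (j:ℕ) (ω (j:ℕ))).toFinset.card
            ≤ m := by
              rw [Set.toFinset_range]
              exact (Finset.card_image_le).trans (by simp)
          _ < N + 1 := Nat.lt_succ_of_le hmN
      obtain ⟨t, ht, htW⟩ := aux_escape N
        (fun l : Fin (N+1) => Real.sin (α m + (l:ℕ) * π / 2) / (l:ℕ).factorial)
        (fun l => div_ne_zero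
          (sin_shift_ne_zero (hα m hmN).1 (hα m hmN).2 l)
          (by exact_mod_cast (l:ℕ).factorial_ne_zero)) W hW
      refine ⟨Function.update ω m t, ?_, ?_⟩
      · intro k
        rcases eq_or_ne k m with rfl | hk
        · rw [Function.update_self]
          exact ⟨le_of_lt ht.1, le_of_lt ht.2⟩
        · rw [Function.update_of_ne hk]
          exact hω k
      · have hfam : (fun j : Fin (m+1) => g (j:ℕ) (Function.update ω m t (j:ℕ)))
            = Fin.snoc (fun j : Fin m => g (j:ℕ) (ω (j:ℕ))) (g m t) := by
          funext j
          refine Fin.lastCases ?_ (fun i => ?_) j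
          · simp [Fin.snoc_last]
          · have hne : ((i.castSucc : Fin (m+1)) : ℕ) ≠ m := by
              simp [Fin.ext_iff]
              omega
            rw [Function.update_of_ne hne]
            simp [Fin.snoc_castSucc]
        rw [hfam]
        refine linearIndependent_fin_snoc.mpr ⟨hli, ?_⟩
        exact htW
  obtain ⟨ω, hω, hli⟩ := key (N+1) le_rfl
  have hcard : Fintype.card (Fin (N+1)) = Module.finrank ℝ (Fin (N+1) → ℝ) := by
    simp [Module.finrank_fin_fun]
  set B := basisOfLinearIndependentOfCardEqFinrank hli hcard with hBdef
  have hB : ⇑B = fun j : Fin (N+1) => g (j:ℕ) (ω (j:ℕ)) :=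
    coe_basisOfLinearIndependentOfCardEqFinrank _ _
  set tv : Fin (N+1) → ℝ := fun l => b (l:ℕ) with htv
  set A : ℕ → ℝ := fun k => if h : k < N + 1 then B.repr tv ⟨k, h⟩ else 0 with hA
  have hpi : (1:ℝ) ≤ 2 * π := by nlinarith [Real.pi_gt_three]
  refine ⟨ω, A, fun k _ => ⟨(hω k).1, le_trans (hω k).2 hpi⟩, fun x _ => ?_⟩
  have hrepr : ∀ l : Fin (N+1), b (l:ℕ) = ∑ j : Fin (N+1), B.repr tv j * g (j:ℕ) (ω (j:ℕ)) l := by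
    intro l
    have hsum := B.sum_repr tv
    calc b (l:ℕ) = tv l := rfl
      _ = (∑ j : Fin (N+1), B.repr tv j • B j) l := by rw [hsum]
      _ = ∑ j : Fin (N+1), B.repr tv j * g (j:ℕ) (ω (j:ℕ)) l := by
          rw [Finset.sum_apply]
          refine Finset.sum_congr rfl fun j _ => ?_
          rw [hB]
          simp
  calc ∑ l ∈ Finset.range (N + 1), b l * x ^ l
      = ∑ l : Fin (N+1), b (l:ℕ) * x ^ (l:ℕ) :=
        (Fin.sum_univ_eq_sum_range (fun l => b l * x ^ l) (N+1)).symm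
    _ = ∑ l : Fin (N+1), ∑ j : Fin (N+1), B.repr tv j * g (j:ℕ) (ω (j:ℕ)) l * x ^ (l:ℕ) := by
        refine Finset.sum_congr rfl fun l _ => ?_
        rw [hrepr l, Finset.sum_mul]
    _ = ∑ j : Fin (N+1), ∑ l : Fin (N+1), B.repr tv j * g (j:ℕ) (ω (j:ℕ)) l * x ^ (l:ℕ) :=
        Finset.sum_comm
    _ = ∑ j : Fin (N+1), A (j:ℕ) * ∑ l : Fin (N+1),
          (ω (j:ℕ)) ^ (l:ℕ) * Real.sin (α (j:ℕ) + (l:ℕ) * π / 2) * x ^ (l:ℕ) / (l:ℕ).factorial := by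
        refine Finset.sum_congr rfl fun j _ => ?_
        rw [Finset.mul_sum]
        refine Finset.sum_congr rfl fun l _ => ?_
        have hAj : A (j:ℕ) = B.repr tv j := by
          rw [hA]
          simp [j.isLt]
        rw [hAj, hg]
        ring
    _ = ∑ k ∈ Finset.range (N + 1), A k * ∑ l ∈ Finset.range (N + 1),
          (ω k) ^ l * Real.sin (α k + l * π / 2) * x ^ l / l.factorial := by
        rw [← Fin.sum_univ_eq_sum_range (fun k => A k * ∑ l ∈ Finset.range (N + 1),
          (ω k) ^ l * Real.sin (α k + l * π / 2) * x ^ l / l.factorial) (N+1)]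
        refine Finset.sum_congr rfl fun j _ => ?_
        rw [← Fin.sum_univ_eq_sum_range (fun l => (ω (j:ℕ)) ^ l * Real.sin (α (j:ℕ) + l * π / 2)
          * x ^ l / l.factorial) (N+1)]
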